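/- Let α ∈ (0,1), let g_α(x) = exp(min(αx, (α−1)x)), and let Z ∼ N(0, σ²) with σ > 0. Then 1/(√(2π) σ α(1−α)) − 1/(√(2π) σ³ α³(1−α)³) ≤ E[g_α(Z)] ≤ 1/(√(2π) σ α(1−α)). Moreover E[g_α(Z)] equals exp(σ²α²/2) Φ(−σα) + exp(σ²(1−α)²/2) Φ(−σ(1−α)), where Φ is the standard normal CDF. -/

import Mathlib

open MeasureTheory Real

/-- `g_α(x) = min(e^{αx}, e^{(α-1)x})`. -/
noncomputable def gfun (α x : ℝ) : ℝ := min (Real.exp (α * x)) (Real.exp ((α - 1) * x))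

/-- The standard normal cumulative distribution function. -/
noncomputable def stdNormalCDF (x : ℝ) : ℝ :=
  (Real.sqrt (2 * Real.pi))⁻¹ * ∫ t in Set.Iic x, Real.exp (-(t ^ 2) / 2)

/-- `E[g_α(Z)]` for `Z ∼ N(0, σ²)`. -/
noncomputable def gaussGExp (α σ : ℝ) : ℝ :=
  (Real.sqrt (2 * Real.pi) * σ)⁻¹ * ∫ x : ℝ, gfun α x * Real.exp (-(x ^ 2) / (2 * σ ^ 2))

/-- **Gaussian computation for `g_α`** (Lemma 2).
For `Z ∼ N(0,σ²)` and `α ∈ (0,1)`: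
`1/(√(2π)σα(1−α)) − 1/(√(2π)σ³α³(1−α)³) ≤ E[g_α(Z)] ≤ 1/(√(2π)σα(1−α))`, and
`E[g_α(Z)] = e^{σ²α²/2}Φ(−σα) + e^{σ²(1−α)²/2}Φ(−σ(1−α))`. -/
lemma int_comp_add_right_Ioi (f : ℝ → ℝ) (a d : ℝ) :
    (∫ x in Set.Ioi a, f (x + d)) = ∫ x in Set.Ioi (a + d), f x := by
  rw [← integral_indicator measurableSet_Ioi, ← integral_indicator measurableSet_Ioi,
    ← integral_add_right_eq_self (fun x => (Set.Ioi (a + d)).indicator f x) d]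
  congr 1
  ext x
  by_cases h : a < x
  · simp [Set.indicator_apply, Set.mem_Ioi, h]
  · simp [Set.indicator_apply, Set.mem_Ioi, h]

lemma halfint (σ b : ℝ) (hσ : 0 < σ) :
    (∫ x in Set.Ioi (0:ℝ), Real.exp (-(b*x) - x^2/(2*σ^2))) =
      σ * Real.exp (σ^2*b^2/2) * ∫ t in Set.Ioi (σ*b), Real.exp (-(t^2)/2) := by
  have h1 : ∀ x : ℝ, Real.exp (-(b*x) - x^2/(2*σ^2)) =
      Real.exp (σ^2*b^2/2) * Real.exp (-(((x + σ^2*b)/σ)^2)/2) := by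
    intro x; rw [← Real.exp_add]; congr 1; field_simp; ring
  simp_rw [h1]
  rw [integral_const_mul]
  have h2 : (∫ x in Set.Ioi (0:ℝ), Real.exp (-(((x + σ^2*b)/σ)^2)/2))
      = ∫ u in Set.Ioi (σ^2*b), Real.exp (-((u/σ)^2)/2) := by
    have := int_comp_add_right_Ioi (fun u => Real.exp (-((u/σ)^2)/2)) 0 (σ^2*b)
    simpa using this
  have h3 : (∫ u in Set.Ioi (σ^2*b), Real.exp (-((u/σ)^2)/2))
      = σ * ∫ t in Set.Ioi (σ*b), Real.exp (-(t^2)/2) := by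
    have h := integral_comp_mul_left_Ioi (fun t => Real.exp (-(t^2)/2)) (σ^2*b)
      (inv_pos.mpr hσ)
    have e1 : σ⁻¹ * (σ^2*b) = σ * b := by field_simp
    have e2 : ∀ u : ℝ, u / σ = σ⁻¹ * u := fun u => div_eq_inv_mul u σ
    simp_rw [e2]
    rw [h, e1, inv_inv, smul_eq_mul]
  rw [h2, h3]; ring

lemma exp_tendsto : Filter.Tendsto (fun t : ℝ => Real.exp (-(t^2)/2)) Filter.atTop (nhds 0) := by
  have h1 : Filter.Tendsto (fun t : ℝ => t^2/2) Filter.atTop Filter.atTop :=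
    (Filter.tendsto_pow_atTop two_ne_zero).atTop_div_const (by norm_num)
  have := Real.tendsto_exp_neg_atTop_nhds_zero.comp h1
  simpa [Function.comp_def, neg_div] using this

lemma deriv_negexp (t : ℝ) :
    HasDerivAt (fun t : ℝ => -Real.exp (-(t^2)/2)) (t * Real.exp (-(t^2)/2)) t := by
  have h : HasDerivAt (fun t : ℝ => -(t^2)/2) (-t) t := by
    have := (hasDerivAt_pow 2 t).neg.div_const 2
    refine this.congr_deriv ?_; push_cast; ring
  have := (h.exp).neg
  refine this.congr_deriv ?_; ring

lemma ftc_upper {c : ℝ} (hc : 0 < c) :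
    (∫ t in Set.Ioi c, t * Real.exp (-(t^2)/2)) = Real.exp (-(c^2)/2) := by
  have := integral_Ioi_of_hasDerivAt_of_nonneg' (a := c)
    (g := fun t : ℝ => -Real.exp (-(t^2)/2)) (g' := fun t => t * Real.exp (-(t^2)/2))
    (fun x _ => deriv_negexp x)
    (fun x hx => mul_nonneg (le_of_lt (hc.trans hx)) (Real.exp_pos _).le)
    (by simpa using exp_tendsto.neg)
  simpa using this

lemma integrableOn_upper {c : ℝ} (hc : 0 < c) :
    IntegrableOn (fun t : ℝ => t * Real.exp (-(t^2)/2)) (Set.Ioi c) := by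
  exact integrableOn_Ioi_deriv_of_nonneg' (fun x _ => deriv_negexp x)
    (fun x hx => mul_nonneg (le_of_lt (hc.trans hx)) (Real.exp_pos _).le)
    (by simpa using exp_tendsto.neg)

lemma integrable_gauss : Integrable (fun t : ℝ => Real.exp (-(t^2)/2)) := by
  have := integrable_exp_neg_mul_sq (b := (1:ℝ)/2) (by norm_num)
  convert this using 2 with t
  ring_nf

lemma mills_upper {c : ℝ} (hc : 0 < c) :
    (∫ t in Set.Ioi c, Real.exp (-(t^2)/2)) ≤ Real.exp (-(c^2)/2) / c := by
  have hle : (∫ t in Set.Ioi c, Real.exp (-(t^2)/2))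
      ≤ ∫ t in Set.Ioi c, c⁻¹ * (t * Real.exp (-(t^2)/2)) := by
    apply setIntegral_mono_on integrable_gauss.integrableOn
      ((integrableOn_upper hc).const_mul _) measurableSet_Ioi
    intro t ht
    have ht' : c < t := ht
    have : (1:ℝ) ≤ c⁻¹ * t := by
      rw [inv_mul_eq_div, le_div_iff₀ hc]; linarith
    nlinarith [Real.exp_pos (-(t^2)/2)]
  rw [integral_const_mul, ftc_upper hc] at hle
  rw [div_eq_inv_mul]; exact hle

lemma deriv_exp' (t : ℝ) :
    HasDerivAt (fun t : ℝ => Real.exp (-(t^2)/2)) (-t * Real.exp (-(t^2)/2)) t := by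
  have h : HasDerivAt (fun t : ℝ => -(t^2)/2) (-t) t := by
    have := (hasDerivAt_pow 2 t).neg.div_const 2
    refine this.congr_deriv ?_; push_cast; ring
  have := h.exp
  convert this using 1; ring

set_option maxHeartbeats 1000000 in
lemma deriv_F {t : ℝ} (ht : t ≠ 0) :
    HasDerivAt (fun t : ℝ => -((t⁻¹ - (t^3)⁻¹) * Real.exp (-(t^2)/2)))
      ((1 - 3/t^4) * Real.exp (-(t^2)/2)) t := by
  have h1 : HasDerivAt (fun t : ℝ => t⁻¹) (-(t^2)⁻¹) t := hasDerivAt_inv ht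
  have h2 := (hasDerivAt_pow 3 t).inv (pow_ne_zero 3 ht)
  have := ((h1.sub h2).mul (deriv_exp' t)).neg
  refine this.congr_deriv ?_
  simp only [Pi.sub_apply, Pi.inv_apply]
  have h4 : t^4 ≠ 0 := pow_ne_zero 4 ht
  field_simp
  ring

lemma tendsto_F : Filter.Tendsto (fun t : ℝ => -((t⁻¹ - (t^3)⁻¹) * Real.exp (-(t^2)/2)))
    Filter.atTop (nhds 0) := by
  have hinv : Filter.Tendsto (fun x : ℝ => x⁻¹) Filter.atTop (nhds 0) := tendsto_inv_atTop_zero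
  have h3 : Filter.Tendsto (fun t : ℝ => (t^3)⁻¹) Filter.atTop (nhds 0) := by
    have := hinv.comp (Filter.tendsto_pow_atTop (by norm_num : (3:ℕ) ≠ 0))
    simpa [Function.comp_def] using this
  have := ((hinv.sub h3).mul exp_tendsto).neg
  simpa using this

lemma integrableOn_lower {c : ℝ} (hc : 0 < c) :
    IntegrableOn (fun t : ℝ => (1 - 3/t^4) * Real.exp (-(t^2)/2)) (Set.Ioi c) := by
  apply Integrable.mono' ((integrable_gauss.const_mul (1 + 3/c^4)).restrict)
  · exact (Measurable.aestronglyMeasurable (by measurability))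
  · rw [ae_restrict_iff' measurableSet_Ioi]
    filter_upwards with t ht
    have htc : c < t := ht
    have h4 : (0:ℝ) < t^4 := pow_pos (hc.trans htc) 4
    have h5 : 3/t^4 ≤ 3/c^4 := by
      have h44 : c^4 ≤ t^4 := pow_le_pow_left₀ hc.le htc.le 4
      exact div_le_div_of_nonneg_left (by norm_num) (pow_pos hc 4) h44
    have h6 : (0:ℝ) ≤ 3/t^4 := div_nonneg (by norm_num) h4.le
    have h7 : (0:ℝ) ≤ 3/c^4 := div_nonneg (by norm_num) (pow_pos hc 4).le
    rw [Real.norm_eq_abs, abs_mul, abs_of_pos (Real.exp_pos _)]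
    apply mul_le_mul_of_nonneg_right _ (Real.exp_pos _).le
    rw [abs_le]
    constructor <;> linarith

lemma ftc_lower {c : ℝ} (hc : 0 < c) :
    (∫ t in Set.Ioi c, (1 - 3/t^4) * Real.exp (-(t^2)/2))
      = (c⁻¹ - (c^3)⁻¹) * Real.exp (-(c^2)/2) := by
  have := integral_Ioi_of_hasDerivAt_of_tendsto' (a := c)
    (f := fun t : ℝ => -((t⁻¹ - (t^3)⁻¹) * Real.exp (-(t^2)/2)))
    (f' := fun t => (1 - 3/t^4) * Real.exp (-(t^2)/2))
    (fun x hx => deriv_F (ne_of_gt (lt_of_lt_of_le hc hx)))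
    (integrableOn_lower hc) tendsto_F
  simpa using this

lemma mills_lower {c : ℝ} (hc : 0 < c) :
    (c⁻¹ - (c^3)⁻¹) * Real.exp (-(c^2)/2) ≤ ∫ t in Set.Ioi c, Real.exp (-(t^2)/2) := by
  rw [← ftc_lower hc]
  apply setIntegral_mono_on (integrableOn_lower hc) integrable_gauss.integrableOn
    measurableSet_Ioi
  intro t ht
  have htc : c < t := ht
  have h6 : (0:ℝ) ≤ 3/t^4 := div_nonneg (by norm_num) (pow_pos (hc.trans htc) 4).le
  nlinarith [Real.exp_pos (-(t^2)/2)]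

lemma integrable_eab (σ b : ℝ) (hσ : 0 < σ) :
    Integrable (fun x : ℝ => Real.exp (-(b*x) - x^2/(2*σ^2))) := by
  have h0 : (0:ℝ) < 1/(2*σ^2) := by positivity
  have h := (integrable_exp_neg_mul_sq h0).comp_sub_right (-(σ^2*b))
  have key : (fun x : ℝ => Real.exp (-(b*x) - x^2/(2*σ^2)))
      = fun x => Real.exp (σ^2*b^2/2) * Real.exp (-(1/(2*σ^2)) * (x - (-(σ^2*b)))^2) := by
    funext x
    rw [← Real.exp_add]; congr 1; field_simp; ring
  rw [key]
  exact h.const_mul _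

lemma term_bounds {c : ℝ} (hc : 0 < c) :
    (c⁻¹ - (c^3)⁻¹ ≤ Real.exp (c^2/2) * ∫ t in Set.Ioi c, Real.exp (-(t^2)/2)) ∧
    (Real.exp (c^2/2) * ∫ t in Set.Ioi c, Real.exp (-(t^2)/2)) ≤ c⁻¹ := by
  have hu := mills_upper hc
  have hl := mills_lower hc
  have hee : Real.exp (c^2/2) * Real.exp (-(c^2)/2) = 1 := by
    rw [← Real.exp_add, show c^2/2 + -(c^2)/2 = 0 from by ring, Real.exp_zero]
  have hE := Real.exp_pos (c^2/2)
  constructor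
  · have h := mul_le_mul_of_nonneg_left hl hE.le
    calc c⁻¹ - (c^3)⁻¹
        = Real.exp (c^2/2) * ((c⁻¹ - (c^3)⁻¹) * Real.exp (-(c^2)/2)) := by
          rw [show Real.exp (c^2/2) * ((c⁻¹ - (c^3)⁻¹) * Real.exp (-(c^2)/2))
            = (Real.exp (c^2/2) * Real.exp (-(c^2)/2)) * (c⁻¹ - (c^3)⁻¹) from by ring,
            hee, one_mul]
      _ ≤ _ := h
  · have h := mul_le_mul_of_nonneg_left hu hE.le
    calc Real.exp (c^2/2) * ∫ t in Set.Ioi c, Real.exp (-(t^2)/2)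
        ≤ Real.exp (c^2/2) * (Real.exp (-(c^2)/2) / c) := h
      _ = c⁻¹ := by
          rw [show Real.exp (c^2/2) * (Real.exp (-(c^2)/2) / c)
            = (Real.exp (c^2/2) * Real.exp (-(c^2)/2)) * c⁻¹ from by ring, hee, one_mul]

lemma gfun_eq_Iic {α x : ℝ} (hx : x ≤ 0) : gfun α x = Real.exp (α * x) :=
  min_eq_left (Real.exp_le_exp.mpr (by nlinarith))

lemma gfun_eq_Ioi {α x : ℝ} (hx : 0 ≤ x) : gfun α x = Real.exp ((α - 1) * x) :=
  min_eq_right (Real.exp_le_exp.mpr (by nlinarith))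

lemma cdf_neg (c : ℝ) : stdNormalCDF (-c)
    = (Real.sqrt (2 * Real.pi))⁻¹ * ∫ t in Set.Ioi c, Real.exp (-(t^2)/2) := by
  unfold stdNormalCDF
  congr 1
  rw [← integral_comp_neg_Ioi c (fun t => Real.exp (-(t^2)/2))]
  simp [neg_sq]

theorem stmt_8 (α σ : ℝ) (hα : α ∈ Set.Ioo (0 : ℝ) 1) (hσ : 0 < σ) :
    (1 / (Real.sqrt (2 * Real.pi) * σ * α * (1 - α)) -
        1 / (Real.sqrt (2 * Real.pi) * σ ^ 3 * α ^ 3 * (1 - α) ^ 3) ≤ gaussGExp α σ ∧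
      gaussGExp α σ ≤ 1 / (Real.sqrt (2 * Real.pi) * σ * α * (1 - α))) ∧
    gaussGExp α σ = Real.exp (σ ^ 2 * α ^ 2 / 2) * stdNormalCDF (-(σ * α)) +
      Real.exp (σ ^ 2 * (1 - α) ^ 2 / 2) * stdNormalCDF (-(σ * (1 - α))) := by
  obtain ⟨hα0, hα1⟩ := hα
  have hβ0 : 0 < 1 - α := by linarith
  have hs : 0 < Real.sqrt (2 * Real.pi) := Real.sqrt_pos.mpr (by positivity)
  have hc1 : 0 < σ * α := mul_pos hσ hα0
  have hc2 : 0 < σ * (1 - α) := mul_pos hσ hβ0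
  have e1 : Set.EqOn (fun x => gfun α x * Real.exp (-(x ^ 2) / (2 * σ ^ 2)))
      (fun x => Real.exp (-(α * (-x)) - (-x)^2/(2*σ^2))) (Set.Iic 0) := by
    intro x hx
    have hx0 : x ≤ 0 := hx
    simp only
    rw [gfun_eq_Iic hx0, ← Real.exp_add]
    congr 1; ring
  have e2 : Set.EqOn (fun x => gfun α x * Real.exp (-(x ^ 2) / (2 * σ ^ 2)))
      (fun x => Real.exp (-((1-α) * x) - x^2/(2*σ^2))) (Set.Ioi 0) := by
    intro x hx
    have hx0 : (0:ℝ) ≤ x := le_of_lt hx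
    simp only
    rw [gfun_eq_Ioi hx0, ← Real.exp_add]
    congr 1; ring
  have hIic : (∫ x in Set.Iic (0:ℝ), gfun α x * Real.exp (-(x ^ 2) / (2 * σ ^ 2)))
      = σ * Real.exp (σ^2*α^2/2) * ∫ t in Set.Ioi (σ*α), Real.exp (-(t^2)/2) := by
    rw [setIntegral_congr_fun measurableSet_Iic e1,
      integral_comp_neg_Iic (0:ℝ) (fun y => Real.exp (-(α*y) - y^2/(2*σ^2))), neg_zero]
    exact halfint σ α hσ
  have hIoi : (∫ x in Set.Ioi (0:ℝ), gfun α x * Real.exp (-(x ^ 2) / (2 * σ ^ 2)))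
      = σ * Real.exp (σ^2*(1-α)^2/2) * ∫ t in Set.Ioi (σ*(1-α)), Real.exp (-(t^2)/2) := by
    rw [setIntegral_congr_fun measurableSet_Ioi e2]
    exact halfint σ (1-α) hσ
  have hintL : IntegrableOn (fun x => gfun α x * Real.exp (-(x ^ 2) / (2 * σ ^ 2)))
      (Set.Iic 0) :=
    IntegrableOn.congr_fun ((integrable_eab σ α hσ).comp_neg).integrableOn e1.symm measurableSet_Iic
  have hintR : IntegrableOn (fun x => gfun α x * Real.exp (-(x ^ 2) / (2 * σ ^ 2)))
      (Set.Ioi 0) :=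
    IntegrableOn.congr_fun (integrable_eab σ (1-α) hσ).integrableOn e2.symm measurableSet_Ioi
  have hsplit := intervalIntegral.integral_Iic_add_Ioi hintL hintR
  have hgauss : gaussGExp α σ = (Real.sqrt (2*Real.pi))⁻¹ *
      (Real.exp ((σ*α)^2/2) * (∫ t in Set.Ioi (σ*α), Real.exp (-(t^2)/2))
       + Real.exp ((σ*(1-α))^2/2) * (∫ t in Set.Ioi (σ*(1-α)), Real.exp (-(t^2)/2))) := by
    unfold gaussGExp
    rw [← hsplit, hIic, hIoi,
      show σ^2*α^2/2 = (σ*α)^2/2 from by ring,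
      show σ^2*(1-α)^2/2 = (σ*(1-α))^2/2 from by ring]
    field_simp
  have hb1 := term_bounds hc1
  have hb2 := term_bounds hc2
  refine ⟨⟨?_, ?_⟩, ?_⟩
  · -- lower bound
    rw [hgauss]
    have sum_low := add_le_add hb1.1 hb2.1
    have hmul := mul_le_mul_of_nonneg_left sum_low (inv_nonneg.mpr hs.le)
    refine le_trans ?_ hmul
    have expand : (Real.sqrt (2*Real.pi))⁻¹ *
        ((σ*α)⁻¹ - ((σ*α)^3)⁻¹ + ((σ*(1-α))⁻¹ - ((σ*(1-α))^3)⁻¹))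
        = 1 / (Real.sqrt (2 * Real.pi) * σ * α * (1 - α)) -
          (α^3 + (1-α)^3) / (Real.sqrt (2 * Real.pi) * σ ^ 3 * α ^ 3 * (1 - α) ^ 3) := by
      field_simp
      ring
    rw [expand]
    have hD : 0 < Real.sqrt (2 * Real.pi) * σ ^ 3 * α ^ 3 * (1 - α) ^ 3 :=
      mul_pos (mul_pos (mul_pos hs (pow_pos hσ 3)) (pow_pos hα0 3)) (pow_pos hβ0 3)
    have hcube : α^3 + (1-α)^3 ≤ 1 := by nlinarith
    have hx := (div_le_div_iff_of_pos_right hD).mpr hcube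
    linarith [hx]
  · -- upper bound
    rw [hgauss]
    have sum_up := add_le_add hb1.2 hb2.2
    have hmul := mul_le_mul_of_nonneg_left sum_up (inv_nonneg.mpr hs.le)
    refine le_trans hmul ?_
    have expand2 : (Real.sqrt (2*Real.pi))⁻¹ * ((σ*α)⁻¹ + (σ*(1-α))⁻¹)
        = 1 / (Real.sqrt (2 * Real.pi) * σ * α * (1 - α)) := by
      field_simp
      ring
    rw [expand2]
  · rw [hgauss, cdf_neg, cdf_neg,
      show σ^2*α^2/2 = (σ*α)^2/2 from by ring,
      show σ^2*(1-α)^2/2 = (σ*(1-α))^2/2 from by ring]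
    ring
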